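/- Let A be a commutative local ring satisfying Weierstrass division, and suppose r = b·f ∈ A[t] is a polynomial of degree at most n−1, where f ∈ A[[t]] reduces mod the maximal ideal to tⁿ·u(t) with u a unit in k[[t]] and b ∈ A[[t]]. If additionally the maximal ideal m of A satisfies ⋂_N m^N·A[[t]] = 0 (e.g. A ∈ Inf_k), then b = 0 and r = 0. -/

import Mathlib

open PowerSeries

def WeierstrassReady {A : Type*} [CommRing A] [IsLocalRing A]
    (f : PowerSeries A) (n : ℕ) : Prop :=
  ∃ u : (PowerSeries (IsLocalRing.ResidueField A))ˣ,
    PowerSeries.map (IsLocalRing.residue A) f = PowerSeries.X ^ n * (u : PowerSeries _)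

def SatisfiesWeierstrassDivision (A : Type*) [CommRing A] [IsLocalRing A] : Prop :=
  ∀ (f : PowerSeries A) (n : ℕ), WeierstrassReady f n →
    ∃ b : Module.Basis (Fin n) A (PowerSeries A ⧸ Ideal.span {f}),
      ∀ i : Fin n, b i = Ideal.Quotient.mk (Ideal.span {f}) (PowerSeries.X ^ (i : ℕ))

theorem aux_r_eq_zero {A : Type*} [CommRing A] [IsLocalRing A]
    (f : PowerSeries A) (n : ℕ)
    (b : Module.Basis (Fin n) A (PowerSeries A ⧸ Ideal.span {f}))
    (hb : ∀ i : Fin n, b i = Ideal.Quotient.mk (Ideal.span {f}) (PowerSeries.X ^ (i : ℕ)))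
    (c : PowerSeries A) (r : Polynomial A)
    (hr : r.degree < n) (hbf : (r : PowerSeries A) = c * f) :
    r = 0 := by
  have hrn : ∀ i, n ≤ i → r.coeff i = 0 := fun i hi =>
    Polynomial.coeff_eq_zero_of_degree_lt (lt_of_lt_of_le hr (Nat.cast_le.2 hi))
  have hq : Ideal.Quotient.mk (Ideal.span {f}) (r : PowerSeries A) = 0 := by
    rw [hbf]
    exact Ideal.Quotient.eq_zero_iff_mem.2 (Ideal.mem_span_singleton.2 ⟨c, mul_comm c f⟩)
  have hsum : (∑ i : Fin n, r.coeff i • b i) = 0 := by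
    have hR : (r : PowerSeries A) = ∑ i : Fin n, PowerSeries.C (r.coeff i) * X ^ (i:ℕ) := by
      ext k
      simp only [Polynomial.coeff_coe, map_sum, PowerSeries.coeff_C_mul,
        PowerSeries.coeff_X_pow, mul_ite, mul_one, mul_zero]
      by_cases hk : k < n
      · rw [Finset.sum_eq_single (⟨k, hk⟩ : Fin n)]
        · simp
        · intro i _ hi
          exact if_neg (fun h => hi (Fin.ext (by simpa using h.symm)))
        · simp
      · rw [Finset.sum_eq_zero, hrn k (Nat.not_lt.1 hk)]
        intro i _
        exact if_neg (fun h => hk (by rw [h]; exact i.isLt))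
    calc (∑ i : Fin n, r.coeff i • b i)
        = Ideal.Quotient.mkₐ A (Ideal.span {f}) (r : PowerSeries A) := by
          rw [hR, map_sum]
          refine Finset.sum_congr rfl fun i _ => ?_
          rw [hb i, ← Ideal.Quotient.mkₐ_eq_mk A, ← map_smul, PowerSeries.smul_eq_C_mul]
      _ = 0 := by rw [Ideal.Quotient.mkₐ_eq_mk]; exact hq
  have hco := Fintype.linearIndependent_iff.1 b.linearIndependent (fun i => r.coeff i) hsum
  ext k
  by_cases hk : k < n
  · simpa using hco ⟨k, hk⟩
  · simp [hrn k (Nat.not_lt.1 hk)]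

theorem aux_b_coeff {A : Type*} [CommRing A] [IsLocalRing A]
    (f b : PowerSeries A) (n : ℕ)
    (hun : IsUnit (coeff n f))
    (hmf : ∀ j < n, coeff j f ∈ IsLocalRing.maximalIdeal A)
    (hbf : b * f = 0) :
    ∀ N k, coeff k b ∈ (IsLocalRing.maximalIdeal A) ^ N := by
  intro N
  induction N with
  | zero => simp
  | succ N ih =>
    intro k
    induction k using Nat.strong_induction_on with
    | _ k ihk =>
      have h0 : (0 : A) = ∑ i ∈ Finset.range (n + k + 1), coeff i b * coeff (n + k - i) f := by
        have := congrArg (coeff (n + k)) hbf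
        rw [coeff_mul, Finset.Nat.sum_antidiagonal_eq_sum_range_succ_mk] at this
        simpa [add_comm n k] using this.symm
      have hk_mem : k ∈ Finset.range (n + k + 1) := Finset.mem_range.2 (by omega)
      have h1 : coeff k b * coeff n f
          = -∑ i ∈ (Finset.range (n + k + 1)).erase k, coeff i b * coeff (n + k - i) f := by
        have := Finset.add_sum_erase _ (fun i => coeff i b * coeff (n + k - i) f) hk_mem
        rw [← this] at h0
        simp only [Nat.add_sub_cancel] at h0
        exact eq_neg_of_add_eq_zero_left h0.symm
      have h2 : coeff k b * coeff n f ∈ (IsLocalRing.maximalIdeal A) ^ (N + 1) := by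
        rw [h1]
        refine Submodule.neg_mem _ (Ideal.sum_mem _ fun i hi => ?_)
        rcases Finset.mem_erase.1 hi with ⟨hik, hirange⟩
        rcases lt_or_gt_of_ne hik with hlt | hgt
        · exact Ideal.mul_mem_right _ _ (ihk i hlt)
        · have hj : n + k - i < n := by
            have := Finset.mem_range.1 hirange; omega
          rw [pow_succ]
          exact Ideal.mul_mem_mul (ih i) (hmf _ hj)
      rcases hun with ⟨v, hv⟩
      have : coeff k b = (coeff k b * coeff n f) * ((v⁻¹ : Aˣ) : A) := by
        rw [← hv, mul_assoc]
        simp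
      rw [this]
      exact Ideal.mul_mem_right _ _ h2

/-- If `A` is local satisfying Weierstrass division, `f` reduces to `tⁿ·(unit)`,
`r = b·f` is a polynomial of degree at most `n - 1`, and `⋂_N m^N·A[[t]] = 0`, then
`b = 0` and `r = 0`. -/
theorem eq_zero_of_poly_mul_weierstrass {A : Type*} [CommRing A] [IsLocalRing A]
    (hA : SatisfiesWeierstrassDivision A)
    (f : PowerSeries A) (n : ℕ) (hf : WeierstrassReady f n)
    (b : PowerSeries A) (r : Polynomial A)
    (hr : r.degree < n) (hbf : (r : PowerSeries A) = b * f)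
    (hcap : (⨅ N : ℕ, Ideal.map (PowerSeries.C (R := A))
        ((IsLocalRing.maximalIdeal A) ^ N)) = ⊥) :
    b = 0 ∧ r = 0 := by
  obtain ⟨B, hB⟩ := hA f n hf
  obtain ⟨u, hu⟩ := hf
  have hr0 : r = 0 := aux_r_eq_zero f n B hB b r hr hbf
  have hbf0 : b * f = 0 := by
    rw [← hbf, hr0]; simp
  have hun : IsUnit (coeff n f) := by
    have h1 : IsLocalRing.residue A (coeff n f)
        = PowerSeries.constantCoeff (u : PowerSeries _) := by
      have := congrArg (coeff n) hu
      simpa [PowerSeries.coeff_X_pow_mul', PowerSeries.coeff_zero_eq_constantCoeff] using this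
    by_contra hnu
    have hm : coeff n f ∈ IsLocalRing.maximalIdeal A := by
      rwa [IsLocalRing.mem_maximalIdeal, mem_nonunits_iff]
    have h2 : IsLocalRing.residue A (coeff n f) = 0 := Ideal.Quotient.eq_zero_iff_mem.2 hm
    rw [h1] at h2
    have : IsUnit ((0 : IsLocalRing.ResidueField A)) := by
      rw [← h2]; exact (PowerSeries.isUnit_constantCoeff _ u.isUnit)
    simp at this
  have hmf : ∀ j < n, coeff j f ∈ IsLocalRing.maximalIdeal A := by
    intro j hj
    have h1 : IsLocalRing.residue A (coeff j f) = 0 := by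
      have := congrArg (coeff j) hu
      simpa [PowerSeries.coeff_X_pow_mul', Nat.not_le.2 hj] using this
    exact Ideal.Quotient.eq_zero_iff_mem.1 h1
  have key := aux_b_coeff f b n hun hmf hbf0
  refine ⟨?_, hr0⟩
  ext k
  have hc : PowerSeries.C (coeff k b)
      ∈ ⨅ N : ℕ, Ideal.map (PowerSeries.C (R := A)) ((IsLocalRing.maximalIdeal A) ^ N) :=
    Submodule.mem_iInf _ |>.2 fun N => Ideal.mem_map_of_mem _ (key N k)
  rw [hcap, Ideal.mem_bot] at hc
  have := congrArg (PowerSeries.constantCoeff (R := A)) hc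
  simpa using this
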